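/- Let q > 0 be real and define the 9×9 real matrix P₀ by (q + q⁻¹ + 1)·P₀ = q⁻¹·E₁₁⊗E₃₃ + q^{−1/2}·E₁₂⊗E₃₂ + E₁₃⊗E₃₁ + q^{−1/2}·E₂₁⊗E₂₃ + E₂₂⊗E₂₂ + q^{1/2}·E₂₃⊗E₂₁ + E₃₁⊗E₁₃ + q^{1/2}·E₃₂⊗E₁₂ + q·E₃₃⊗E₁₁, where E_{ij} are 3×3 elementary matrices and ⊗ is the Kronecker product. Let M be the 9×9 matrix (using 9×9 elementary matrices Ẽ_{ab}) given by M = (Ẽ₁₃ + q^{1/2}Ẽ₁₅ + qẼ₁₇) + (Ẽ₂₂ − qẼ₂₄) + (Ẽ₃₆ − qẼ₃₈) + (Ẽ₄₃ + sẼ₄₅ − Ẽ₄₇) + Ẽ₅₁ + (Ẽ₆₂ + q⁻¹Ẽ₆₄) + (Ẽ₇₃ + tẼ₇₅ + q⁻²Ẽ₇₇) + (Ẽ₈₆ + q⁻¹Ẽ₈₈) + Ẽ₉₉, where s = −q^{−1/2}(1−q) and t = −q^{−3/2}(1+q). Then: (a) P₀² = P₀ and trace(P₀) = 1; and (b) M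 is invertible and M·P₀·M⁻¹ = Ẽ₁₁, i.e. M·P₀·M⁻¹ = diag(1,0,0,0,0,0,0,0,0). -/

import Mathlib

open Matrix Kronecker

/-- `3×3` elementary matrix with a single `1` at position `(i,j)`. -/
noncomputable def e3 (i j : Fin 3) : Matrix (Fin 3) (Fin 3) ℝ :=
  Matrix.single i j 1

/-- The rank-one projector `P₀` of the new class of `SO_q(3)` braid matrices:
`(q + q⁻¹ + 1) P₀ = q⁻¹ E₁₁⊗E₃₃ + q^{-1/2} E₁₂⊗E₃₂ + E₁₃⊗E₃₁ + q^{-1/2} E₂₁⊗E₂₃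
 + E₂₂⊗E₂₂ + q^{1/2} E₂₃⊗E₂₁ + E₃₁⊗E₁₃ + q^{1/2} E₃₂⊗E₁₂ + q E₃₃⊗E₁₁`. -/
noncomputable def P0so3 (q : ℝ) : Matrix (Fin 3 × Fin 3) (Fin 3 × Fin 3) ℝ :=
  (q + q⁻¹ + 1)⁻¹ •
    (q⁻¹ • (e3 0 0 ⊗ₖ e3 2 2) + (Real.sqrt q)⁻¹ • (e3 0 1 ⊗ₖ e3 2 1)
      + e3 0 2 ⊗ₖ e3 2 0
      + (Real.sqrt q)⁻¹ • (e3 1 0 ⊗ₖ e3 1 2) + e3 1 1 ⊗ₖ e3 1 1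
      + Real.sqrt q • (e3 1 2 ⊗ₖ e3 1 0)
      + e3 2 0 ⊗ₖ e3 0 2 + Real.sqrt q • (e3 2 1 ⊗ₖ e3 0 1)
      + q • (e3 2 2 ⊗ₖ e3 0 0))

/-- Row-major decoding `Fin 9 → Fin 3 × Fin 3` (position `3i+j ↦ (i,j)`), identifying
the `9×9` index with the tensor-square index. -/
def dec9 (k : Fin 9) : Fin 3 × Fin 3 :=
  (⟨k.val / 3, by have := k.isLt; omega⟩, ⟨k.val % 3, by have := k.isLt; omega⟩)

/-- The diagonalizer `M` of `P₀`, with `s = -q^{-1/2}(1-q)`, `t = -q^{-3/2}(1+q)`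
(rows and columns numbered `1,…,9` in the paper, `0,…,8` here). -/
noncomputable def Mso3 (q : ℝ) : Matrix (Fin 9) (Fin 9) ℝ :=
  (Matrix.single 0 2 1 + Real.sqrt q • Matrix.single 0 4 1
      + q • Matrix.single 0 6 1)
    + (Matrix.single 1 1 1 - q • Matrix.single 1 3 1)
    + (Matrix.single 2 5 1 - q • Matrix.single 2 7 1)
    + (Matrix.single 3 2 1
      + (-(Real.sqrt q)⁻¹ * (1 - q)) • Matrix.single 3 4 1
      - Matrix.single 3 6 1)
    + Matrix.single 4 0 1
    + (Matrix.single 5 1 1 + q⁻¹ • Matrix.single 5 3 1)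
    + (Matrix.single 6 2 1
      + (-((Real.sqrt q)⁻¹ * q⁻¹) * (1 + q)) • Matrix.single 6 4 1
      + (q ^ 2)⁻¹ • Matrix.single 6 6 1)
    + (Matrix.single 7 5 1 + q⁻¹ • Matrix.single 7 7 1)
    + Matrix.single 8 8 1


namespace So3Aux

open Matrix

/-! ### Generic rank-one matrix helpers -/

lemma mul_vecMulVec' {n m p : Type*} [Fintype m] (A : Matrix n m ℝ) (x : m → ℝ) (y : p → ℝ) :
    A * Matrix.vecMulVec x y = Matrix.vecMulVec (A *ᵥ x) y := by
  ext i j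
  simp only [Matrix.mul_apply, Matrix.vecMulVec_apply, Matrix.mulVec, dotProduct,
    Finset.sum_mul]
  exact Finset.sum_congr rfl fun k _ => by ring

lemma vecMulVec_mul' {n m p : Type*} [Fintype m] (x : n → ℝ) (y : m → ℝ) (B : Matrix m p ℝ) :
    Matrix.vecMulVec x y * B = Matrix.vecMulVec x (y ᵥ* B) := by
  ext i j
  simp only [Matrix.mul_apply, Matrix.vecMulVec_apply, Matrix.vecMul, dotProduct,
    Finset.mul_sum]
  exact Finset.sum_congr rfl fun k _ => by ring

lemma vv_mul_vv {n m p : Type*} [Fintype m] (x : n → ℝ) (y z : m → ℝ) (w : p → ℝ) :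
    Matrix.vecMulVec x y * Matrix.vecMulVec z w
      = (∑ k, y k * z k) • Matrix.vecMulVec x w := by
  ext i j
  simp only [Matrix.mul_apply, Matrix.vecMulVec_apply, Matrix.smul_apply, smul_eq_mul,
    Finset.sum_mul]
  exact Finset.sum_congr rfl fun k _ => by ring

lemma trace_vv {n : Type*} [Fintype n] (x y : n → ℝ) :
    Matrix.trace (Matrix.vecMulVec x y) = ∑ i, x i * y i := by
  simp [Matrix.trace, Matrix.diag, Matrix.vecMulVec_apply]

lemma vv_smul (k l : ℝ) {n m : Type*} (x : n → ℝ) (y : m → ℝ) :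
    Matrix.vecMulVec (k • x) (l • y) = (k * l) • Matrix.vecMulVec x y := by
  ext i j
  simp [Matrix.vecMulVec_apply]; ring

lemma sum9 (f : Fin 9 → ℝ) : ∑ i, f i =
    f ⟨0, by omega⟩ + f ⟨1, by omega⟩ + f ⟨2, by omega⟩ + f ⟨3, by omega⟩ + f ⟨4, by omega⟩
      + f ⟨5, by omega⟩ + f ⟨6, by omega⟩ + f ⟨7, by omega⟩ + f ⟨8, by omega⟩ := by
  rw [Fin.sum_univ_succ, Fin.sum_univ_succ, Fin.sum_univ_succ, Fin.sum_univ_succ,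
    Fin.sum_univ_succ, Fin.sum_univ_succ, Fin.sum_univ_succ, Fin.sum_univ_succ,
    Fin.sum_univ_one]
  norm_num [Fin.succ, Fin.ext_iff]
  ring

lemma sb_apply {n : Type*} [DecidableEq n] (i j k l : n) (c : ℝ) :
    Matrix.single i j c k l = if i = k ∧ j = l then c else 0 := rfl

lemma e3_apply (i j k l : Fin 3) : e3 i j k l = if i = k ∧ j = l then 1 else 0 := rfl

/-! ### The rank-one vector of `P₀` -/

noncomputable def vso3 (a : ℝ) : Fin 3 × Fin 3 → ℝ :=
  fun p => !![0, 0, a⁻¹; 0, 1, 0; a, 0, 0] p.1 p.2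

set_option maxHeartbeats 1000000 in
lemma hP (a : ℝ) (ha : 0 < a) :
    P0so3 (a * a) = (a * a + (a * a)⁻¹ + 1)⁻¹ • Matrix.vecMulVec (vso3 a) (vso3 a) := by
  have hs : Real.sqrt (a * a) = a := Real.sqrt_mul_self ha.le
  have ha0 : a ≠ 0 := ha.ne'
  ext ⟨i, j⟩ ⟨k, l⟩
  simp only [P0so3, Matrix.smul_apply, Matrix.add_apply, Matrix.kroneckerMap_apply, e3_apply,
    Fin.ext_iff, smul_eq_mul, Matrix.vecMulVec_apply, vso3, hs]
  fin_cases i <;> fin_cases j <;> fin_cases k <;> fin_cases l <;>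
    norm_num [Fin.ext_iff, _root_.mul_inv_rev, inv_mul_cancel₀ ha0, mul_inv_cancel₀ ha0]

lemma hS (a : ℝ) (ha : 0 < a) :
    (∑ p : Fin 3 × Fin 3, vso3 a p * vso3 a p) = a * a + (a * a)⁻¹ + 1 := by
  have ha0 : a ≠ 0 := ha.ne'
  rw [Fintype.sum_prod_type]
  rw [Fin.sum_univ_three, Fin.sum_univ_three, Fin.sum_univ_three, Fin.sum_univ_three]
  norm_num [vso3, Matrix.vecHead, Matrix.vecTail, Matrix.cons_val_two]
  field_simp
  ring

/-! ### Explicit forms of `M` and its inverse -/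

noncomputable def Mexp (a : ℝ) : Matrix (Fin 9) (Fin 9) ℝ :=
  Matrix.of fun i j =>
    if i.val = 0 ∧ j.val = 2 then 1
    else if i.val = 0 ∧ j.val = 4 then a
    else if i.val = 0 ∧ j.val = 6 then a * a
    else if i.val = 1 ∧ j.val = 1 then 1
    else if i.val = 1 ∧ j.val = 3 then -(a * a)
    else if i.val = 2 ∧ j.val = 5 then 1
    else if i.val = 2 ∧ j.val = 7 then -(a * a)
    else if i.val = 3 ∧ j.val = 2 then 1
    else if i.val = 3 ∧ j.val = 4 then -a⁻¹ * (1 - a * a)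
    else if i.val = 3 ∧ j.val = 6 then -1
    else if i.val = 4 ∧ j.val = 0 then 1
    else if i.val = 5 ∧ j.val = 1 then 1
    else if i.val = 5 ∧ j.val = 3 then (a * a)⁻¹
    else if i.val = 6 ∧ j.val = 2 then 1
    else if i.val = 6 ∧ j.val = 4 then -(a⁻¹ * (a * a)⁻¹) * (1 + a * a)
    else if i.val = 6 ∧ j.val = 6 then ((a * a) ^ 2)⁻¹
    else if i.val = 7 ∧ j.val = 5 then 1
    else if i.val = 7 ∧ j.val = 7 then (a * a)⁻¹
    else if i.val = 8 ∧ j.val = 8 then 1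
    else 0

noncomputable def Nexp (a : ℝ) : Matrix (Fin 9) (Fin 9) ℝ :=
  Matrix.of fun i j =>
    let D1 : ℝ := 1 + a ^ 4
    let D2 : ℝ := 1 + a ^ 2 + a ^ 4
    if i.val = 0 ∧ j.val = 4 then 1
    else if i.val = 1 ∧ j.val = 1 then 1 / D1
    else if i.val = 1 ∧ j.val = 5 then a ^ 4 / D1
    else if i.val = 2 ∧ j.val = 0 then 1 / D2
    else if i.val = 2 ∧ j.val = 3 then a ^ 2 / D1
    else if i.val = 2 ∧ j.val = 6 then a ^ 8 / (D1 * D2)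
    else if i.val = 3 ∧ j.val = 1 then -(a ^ 2) / D1
    else if i.val = 3 ∧ j.val = 5 then a ^ 2 / D1
    else if i.val = 4 ∧ j.val = 0 then a / D2
    else if i.val = 4 ∧ j.val = 3 then (a ^ 3 - a) / D1
    else if i.val = 4 ∧ j.val = 6 then -(a ^ 5 + a ^ 7) / (D1 * D2)
    else if i.val = 5 ∧ j.val = 2 then 1 / D1
    else if i.val = 5 ∧ j.val = 7 then a ^ 4 / D1
    else if i.val = 6 ∧ j.val = 0 then a ^ 2 / D2
    else if i.val = 6 ∧ j.val = 3 then -(a ^ 2) / D1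
    else if i.val = 6 ∧ j.val = 6 then a ^ 4 / (D1 * D2)
    else if i.val = 7 ∧ j.val = 2 then -(a ^ 2) / D1
    else if i.val = 7 ∧ j.val = 7 then a ^ 2 / D1
    else if i.val = 8 ∧ j.val = 8 then 1
    else 0

set_option maxHeartbeats 2000000 in
lemma hM (a : ℝ) (ha : 0 < a) : Mso3 (a * a) = Mexp a := by
  have hs : Real.sqrt (a * a) = a := Real.sqrt_mul_self ha.le
  ext i j
  simp only [Mso3, Matrix.add_apply, Matrix.sub_apply, Matrix.smul_apply, sb_apply,
    smul_eq_mul, hs, Mexp, Matrix.of_apply]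
  fin_cases i <;> fin_cases j <;> simp (config := { decide := true })

set_option maxHeartbeats 10000000 in
lemma hMN (a : ℝ) (ha : 0 < a) : Mexp a * Nexp a = 1 := by
  have ha0 : a ≠ 0 := ha.ne'
  have hD1 : (1 : ℝ) + a ^ 4 ≠ 0 := by positivity
  have hD2 : (1 : ℝ) + a ^ 2 + a ^ 4 ≠ 0 := by positivity
  ext i j
  rw [Matrix.mul_apply, sum9, Matrix.one_apply]
  fin_cases i <;> fin_cases j <;>
    simp only [Mexp, Nexp, Matrix.of_apply] <;> norm_num [Fin.ext_iff] <;> field_simp <;> ring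

set_option maxHeartbeats 2000000 in
lemma hMv (a : ℝ) (ha : 0 < a) :
    Mexp a *ᵥ (vso3 a ∘ dec9) = (a⁻¹ * (1 + a ^ 2 + a ^ 4)) • (Pi.single 0 1 : Fin 9 → ℝ) := by
  have ha0 : a ≠ 0 := ha.ne'
  funext i
  show ∑ k, Mexp a i k * (vso3 a ∘ dec9) k = _
  rw [sum9]
  fin_cases i <;> simp only [Mexp, Matrix.of_apply] <;>
    norm_num [Mexp, vso3, dec9, Pi.single_apply, Pi.smul_apply, Fin.ext_iff,
      Matrix.vecHead, Matrix.vecTail, Matrix.cons_val_two] <;> field_simp <;> ring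

set_option maxHeartbeats 2000000 in
lemma hvN (a : ℝ) (ha : 0 < a) :
    (vso3 a ∘ dec9) ᵥ* Nexp a = a⁻¹ • (Pi.single 0 1 : Fin 9 → ℝ) := by
  have ha0 : a ≠ 0 := ha.ne'
  have hD1 : (1 : ℝ) + a ^ 4 ≠ 0 := by positivity
  have hD2 : (1 : ℝ) + a ^ 2 + a ^ 4 ≠ 0 := by positivity
  funext j
  show ∑ k, (vso3 a ∘ dec9) k * Nexp a k j = _
  rw [sum9]
  fin_cases j <;> simp only [Nexp, Matrix.of_apply] <;>
    norm_num [Nexp, vso3, dec9, Pi.single_apply, Pi.smul_apply, Fin.ext_iff,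
      Matrix.vecHead, Matrix.vecTail, Matrix.cons_val_two] <;> field_simp <;> ring

end So3Aux

/-- `P₀` is a projector of trace `1`, `M` is invertible, and
`M P₀ M⁻¹ = Ẽ₁₁ = diag(1,0,…,0)`. -/
theorem so3_P0_projector_and_diagonalization (q : ℝ) (hq : 0 < q) :
    (P0so3 q * P0so3 q = P0so3 q ∧ Matrix.trace (P0so3 q) = 1) ∧
    IsUnit (Mso3 q) ∧
    Mso3 q * (P0so3 q).submatrix dec9 dec9 * (Mso3 q)⁻¹ =
      Matrix.single 0 0 (1 : ℝ) := by
  obtain ⟨a, ha, rfl⟩ : ∃ a : ℝ, 0 < a ∧ a * a = q :=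
    ⟨Real.sqrt q, Real.sqrt_pos.mpr hq, Real.mul_self_sqrt hq.le⟩
  have ha0 : a ≠ 0 := ha.ne'
  have hden : a * a + (a * a)⁻¹ + 1 ≠ 0 := by positivity
  have hc : (a * a + (a * a)⁻¹ + 1)⁻¹ * (a * a + (a * a)⁻¹ + 1) = 1 := inv_mul_cancel₀ hden
  have hMeq : Mso3 (a * a) = So3Aux.Mexp a := So3Aux.hM a ha
  have hMN' : So3Aux.Mexp a * So3Aux.Nexp a = 1 := So3Aux.hMN a ha
  refine ⟨⟨?_, ?_⟩, ?_, ?_⟩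
  · rw [So3Aux.hP a ha, Matrix.smul_mul, Matrix.mul_smul, So3Aux.vv_mul_vv,
      So3Aux.hS a ha, smul_smul, smul_smul, mul_assoc, hc, mul_one]
  · rw [So3Aux.hP a ha, Matrix.trace_smul, So3Aux.trace_vv, So3Aux.hS a ha, smul_eq_mul, hc]
  · rw [hMeq]
    exact (Matrix.isUnit_iff_isUnit_det _).mpr (Matrix.isUnit_det_of_right_inverse hMN')
  · have hNinv : (Mso3 (a * a))⁻¹ = So3Aux.Nexp a := by
      rw [hMeq]; exact Matrix.inv_eq_right_inv hMN'
    rw [hNinv, hMeq, So3Aux.hP a ha]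
    have hsub : ((a * a + (a * a)⁻¹ + 1)⁻¹ •
          Matrix.vecMulVec (So3Aux.vso3 a) (So3Aux.vso3 a)).submatrix dec9 dec9
        = (a * a + (a * a)⁻¹ + 1)⁻¹ •
          Matrix.vecMulVec (So3Aux.vso3 a ∘ dec9) (So3Aux.vso3 a ∘ dec9) := rfl
    rw [hsub, Matrix.mul_smul, Matrix.smul_mul,
      So3Aux.mul_vecMulVec', So3Aux.vecMulVec_mul', So3Aux.hMv a ha, So3Aux.hvN a ha,
      So3Aux.vv_smul, smul_smul, Matrix.single_eq_single_vecMulVec_single]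
    have hscal : (a * a + (a * a)⁻¹ + 1)⁻¹ * (a⁻¹ * (1 + a ^ 2 + a ^ 4) * a⁻¹) = 1 := by
      rw [show a⁻¹ * (1 + a ^ 2 + a ^ 4) * a⁻¹ = a * a + (a * a)⁻¹ + 1 by
        field_simp; ring]
      exact hc
    rw [hscal, one_smul]
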